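/- arXiv:1706.04608 — 3 statements merged into one kernel-verified Lean document; each statement's English description precedes it below -/
import Mathlib

section
/- Let n ≥ 1 and 0 ≤ m ≤ n, and let α_1, …, α_n be positive real numbers, all different from 1, such that α_1, …, α_m are not integers and α_{m+1}, …, α_n are integers. Suppose there exist a subset A ⊆ {1, …, n} with {1, …, m} ⊆ A, a nonnegative integer k, signs ε_j ∈ {−1, +1} for j ∈ A, and signs δ_i ∈ {−1, +1} for 1 ≤ i ≤ k, such that ∑_{j∈A} ε_j α_j + ∑_{i=1}^k δ_i = 0 and ∑_{j∉A} (α_j − 1) = |A| + k − 2. Then there exist signs ε'_1, …, ε'_m ∈ {−1, +1} and a nonnegative integer k' such that ∑_{j=1}^m ε'_j α_j = k' and the number k'' := ∑_{j=m+1}^n α_j − n − k' + 2 is a nonnegative even integer. -/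
theorem condition_one_implies_alt_bet
    (n m : ℕ) (hn : 1 ≤ n) (hmn : m ≤ n) (α : Fin n → ℝ)
    (hpos : ∀ j, 0 < α j)
    (hne1 : ∀ j, α j ≠ 1)
    (hnonint : ∀ j : Fin n, (j : ℕ) < m → ¬ ∃ a : ℤ, α j = a)
    (hint : ∀ j : Fin n, m ≤ (j : ℕ) → ∃ a : ℤ, α j = a)
    (hcond : ∃ (A : Finset (Fin n)), (∀ j : Fin n, (j : ℕ) < m → j ∈ A) ∧
      ∃ (k : ℕ) (ε : Fin n → ℝ) (δ : Fin k → ℝ),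
        (∀ j ∈ A, ε j = 1 ∨ ε j = -1) ∧
        (∀ i, δ i = 1 ∨ δ i = -1) ∧
        ∑ j ∈ A, ε j * α j + ∑ i, δ i = 0 ∧
        ∑ j ∈ Aᶜ, (α j - 1) = (A.card : ℝ) + k - 2) :
    ∃ (ε' : Fin n → ℝ) (k' : ℕ),
      (∀ j : Fin n, (j : ℕ) < m → ε' j = 1 ∨ ε' j = -1) ∧
      ∑ j ∈ Finset.univ.filter (fun j : Fin n => (j : ℕ) < m), ε' j * α j = k' ∧
      ∃ k'' : ℕ, Even k'' ∧
        (k'' : ℝ) = ∑ j ∈ Finset.univ.filter (fun j : Fin n => m ≤ (j : ℕ)), α j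
          - n - k' + 2 := by
  classical
  obtain ⟨A, hSA, k, ε, δ, hε, hδ, hsum, hcard⟩ := hcond
  set S : Finset (Fin n) := Finset.univ.filter (fun j : Fin n => (j : ℕ) < m) with hS
  have hSsub : S ⊆ A := by
    intro j hj
    simp only [hS, Finset.mem_filter, Finset.mem_univ, true_and] at hj
    exact hSA j hj
  set R := (Int.castRingHom ℝ).range with hR
  have hαR : ∀ j : Fin n, m ≤ (j : ℕ) → α j ∈ R := by
    intro j hj
    obtain ⟨a, ha⟩ := hint j hj
    exact ⟨a, ha.symm⟩
  have hεR : ∀ j ∈ A, ε j ∈ R := by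
    intro j hj
    rcases hε j hj with h | h <;> rw [h]
    · exact one_mem R
    · exact neg_mem (one_mem R)
  have hδR : ∀ i, δ i ∈ R := by
    intro i
    rcases hδ i with h | h <;> rw [h]
    · exact one_mem R
    · exact neg_mem (one_mem R)
  have hmemAS : ∀ j ∈ A \ S, m ≤ (j : ℕ) := by
    intro j hj
    rw [Finset.mem_sdiff] at hj
    have := hj.2
    simp only [hS, Finset.mem_filter, Finset.mem_univ, true_and, not_lt] at this
    exact this
  -- split the A-sum
  have hsplit : ∑ j ∈ A \ S, ε j * α j + ∑ j ∈ S, ε j * α j = ∑ j ∈ A, ε j * α j :=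
    Finset.sum_sdiff hSsub
  set T : ℝ := ∑ j ∈ S, ε j * α j with hTdef
  have hT_eq : ∑ j ∈ A \ S, ε j * α j + ∑ i, δ i = -T := by linarith
  have hTR : T ∈ R := by
    have : T = -(∑ j ∈ A \ S, ε j * α j + ∑ i, δ i) := by linarith
    rw [this]
    refine neg_mem (add_mem (sum_mem ?_) (sum_mem (fun i _ => hδR i)))
    exact fun j hj => mul_mem (hεR j (Finset.mem_sdiff.mp hj).1) (hαR j (hmemAS j hj))
  obtain ⟨t, ht⟩ := hTR
  simp only [Int.coe_castRingHom] at ht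
  -- choose sign
  obtain ⟨s, k', hs, hk'⟩ : ∃ (s : ℝ) (k' : ℕ), (s = 1 ∨ s = -1) ∧ (k' : ℝ) = s * (t : ℝ) := by
    rcases le_or_gt 0 t with h | h
    · refine ⟨1, t.toNat, Or.inl rfl, ?_⟩
      have : (t.toNat : ℤ) = t := Int.toNat_of_nonneg h
      rw [one_mul]; exact_mod_cast this
    · refine ⟨-1, (-t).toNat, Or.inr rfl, ?_⟩
      have : ((-t).toNat : ℤ) = -t := Int.toNat_of_nonneg (by omega)
      rw [neg_one_mul]; exact_mod_cast this
  refine ⟨fun j => s * ε j, k', ?_, ?_, ?_⟩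
  · intro j hj
    rcases hs with h | h <;> rcases hε j (hSA j hj) with h2 | h2 <;>
      norm_num [h, h2]
  · have : ∑ j ∈ S, (s * ε j) * α j = s * T := by
      rw [hTdef, Finset.mul_sum]
      exact Finset.sum_congr rfl (fun j _ => by ring)
    rw [this, ← ht, hk']
  · -- the half sum
    set H : ℝ := ∑ j ∈ A \ S, ((1 + s * ε j) / 2) * α j + ∑ i, (1 + s * δ i) / 2 with hHdef
    have hcoef : ∀ x : ℝ, (x = 1 ∨ x = -1) → ((1 + s * x) / 2 = 0 ∨ (1 + s * x) / 2 = 1) := by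
      intro x hx
      rcases hs with h | h <;> rcases hx with h2 | h2 <;> rw [h, h2] <;> norm_num
    have hHR : H ∈ R := by
      refine add_mem (sum_mem ?_) (sum_mem ?_)
      · intro j hj
        refine mul_mem ?_ (hαR j (hmemAS j hj))
        rcases hcoef (ε j) (hε j (Finset.mem_sdiff.mp hj).1) with h | h <;> rw [h]
        · exact zero_mem R
        · exact one_mem R
      · intro i _
        rcases hcoef (δ i) (hδ i) with h | h <;> rw [h]
        · exact zero_mem R
        · exact one_mem R
    have hHnn : 0 ≤ H := by
      refine add_nonneg (Finset.sum_nonneg ?_) (Finset.sum_nonneg ?_)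
      · intro j hj
        rcases hcoef (ε j) (hε j (Finset.mem_sdiff.mp hj).1) with h | h <;> rw [h]
        · simp
        · simpa using (hpos j).le
      · intro i _
        rcases hcoef (δ i) (hδ i) with h | h <;> rw [h] <;> norm_num
    obtain ⟨h, hh⟩ := hHR
    simp only [Int.coe_castRingHom] at hh
    have hh0 : 0 ≤ h := by exact_mod_cast hh ▸ hHnn
    refine ⟨(2 * h).toNat, ⟨h.toNat, by omega⟩, ?_⟩
    have hkcast : ((2 * h).toNat : ℝ) = 2 * H := by
      have h2 : ((2 * h).toNat : ℤ) = 2 * h := Int.toNat_of_nonneg (by omega)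
      have h3 : (((2 * h).toNat : ℤ) : ℝ) = ((2 * h : ℤ) : ℝ) := by exact_mod_cast h2
      push_cast at h3
      rw [h3, hh]
    rw [hkcast]
    -- now the arithmetic identity
    have hfilter : Finset.univ.filter (fun j : Fin n => m ≤ (j : ℕ)) = Sᶜ := by
      ext j
      simp [hS, not_lt]
    rw [hfilter]
    have e1 : ∑ j ∈ S, α j + ∑ j ∈ Sᶜ, α j = ∑ j, α j := Finset.sum_add_sum_compl S α
    have e2 : ∑ j ∈ A, α j + ∑ j ∈ Aᶜ, α j = ∑ j, α j := Finset.sum_add_sum_compl A α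
    have e3 : ∑ j ∈ A \ S, α j + ∑ j ∈ S, α j = ∑ j ∈ A, α j := Finset.sum_sdiff hSsub
    have hAc : ∑ j ∈ Aᶜ, α j = (n : ℝ) + k - 2 := by
      have hc1 : ∑ j ∈ Aᶜ, (α j - 1) = ∑ j ∈ Aᶜ, α j - (Aᶜ.card : ℝ) := by
        rw [Finset.sum_sub_distrib, Finset.sum_const, nsmul_eq_mul, mul_one]
      have hc2 : A.card + Aᶜ.card = n := by
        rw [Finset.card_add_card_compl]; simp
      have hc2' : (A.card : ℝ) + (Aᶜ.card : ℝ) = n := by exact_mod_cast hc2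
      rw [hc1] at hcard
      linarith
    have hHval : 2 * H = ∑ j ∈ A \ S, α j + s * (∑ j ∈ A \ S, ε j * α j) + (k : ℝ)
        + s * ∑ i, δ i := by
      rw [hHdef]
      rw [mul_add, Finset.mul_sum, Finset.mul_sum]
      have t1 : ∀ j ∈ A \ S, 2 * (((1 + s * ε j) / 2) * α j) = α j + s * (ε j * α j) := by
        intro j _; ring
      have t2 : ∀ i : Fin k, (2 : ℝ) * ((1 + s * δ i) / 2) = 1 + s * δ i := by
        intro i; ring
      rw [Finset.sum_congr rfl t1, Finset.sum_congr rfl (fun i _ => t2 i)]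
      rw [Finset.sum_add_distrib, Finset.sum_add_distrib, Finset.sum_const, Finset.card_univ]
      simp [Finset.mul_sum]
      ring
    have hsT : s * (∑ j ∈ A \ S, ε j * α j + ∑ i, δ i) = -(k' : ℝ) := by
      rw [hT_eq, ← ht, hk']; ring
    have : s * (∑ j ∈ A \ S, ε j * α j) + s * ∑ i, δ i = -(k' : ℝ) := by
      rw [← mul_add]; exact hsT
    linarith
end

section
/- Let 0 ≤ m ≤ n, let α_1, …, α_m be positive non-integer real numbers, and let α_{m+1}, …, α_n be integers ≥ 2. Let ε_1, …, ε_m ∈ {−1, +1} and let k', k'' be nonnegative integers with ∑_{j=1}^m ε_j α_j = k' and k'' = ∑_{j=m+1}^n α_j − n − k' + 2. Set q := m + k' + k'' and c := (α_1, …, α_m, 1, …, 1) ∈ ℝ^q with k' + k'' trailing ones, and suppose c = η·b for a primitive integer vector b = (b_1, …, b_q) and some η ≠ 0. If there exist signs δ_1, …, δ_{k'+k''} ∈ {−1, +1} with ∑_{j=1}^m ε_j α_j + ∑_{i=1}^{k'+k''} δ_i = 0, pairwise distinct complex numbers z_1, …, z_q, a nonzero constant C ∈ ℂ, and pairwise distinct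 complex numbers w_{m+1}, …, w_n such that, setting c_j = ε_j α_j for 1 ≤ j ≤ m and c_{m+i} = δ_i for 1 ≤ i ≤ k' + k'', one has ∑_{j=1}^q c_j ∏_{i≠j}(X − z_i) = C ∏_{j=m+1}^n (X − w_j)^{α_j − 1} in ℂ[X], then 2·max_{m+1≤j≤n} α_j ≤ ∑_{j=1}^q |b_j|. -/
open Polynomial

lemma derivXsubC (w : ℂ) (n : ℕ) : derivative ((X - C w)^n) = C (n:ℂ) * (X - C w)^(n-1) := by
  rw [derivative_pow, derivative_X_sub_C, mul_one]

lemma key_dvd (u h : ℂ[X]) (w : ℂ) (hu : u.eval w = 0) (hh : h.eval w ≠ 0) :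
    ∀ t : ℕ, ((X - C w)^t ∣ (derivative u * h - u * derivative h)) →
      (X - C w)^(t+1) ∣ u := by
  intro t
  induction t with
  | zero =>
    intro _
    simpa [pow_one] using (dvd_iff_isRoot.mpr hu)
  | succ t ih =>
    intro hdvd
    obtain ⟨v, hv⟩ := ih (dvd_trans (pow_dvd_pow _ (Nat.le_succ t)) hdvd)
    have hDer : derivative u = C ((t:ℂ)+1) * (X - C w)^t * v + (X - C w)^(t+1) * derivative v := by
      rw [hv, derivative_mul, derivXsubC]
      push_cast
      ring_nf
    set W : ℂ[X] := C ((t:ℂ)+1) * v * h + (X - C w) * (derivative v * h - v * derivative h) with hW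
    have hfac : derivative u * h - u * derivative h = (X - C w)^t * W := by
      rw [hDer, hv, hW, pow_succ]
      ring
    have hdvdW : (X - C w) ∣ W := by
      have h2 : (X - C w)^t * (X - C w) ∣ (X - C w)^t * W := by
        rw [← pow_succ, ← hfac]; exact hdvd
      exact (mul_dvd_mul_iff_left (pow_ne_zero t (X_sub_C_ne_zero w))).mp h2
    have hWeval : W.eval w = 0 := by
      have := dvd_iff_isRoot.mp hdvdW
      simpa [IsRoot] using this
    have hveval : v.eval w = 0 := by
      simp [hW] at hWeval
      rcases hWeval with h1 | h1
      · rcases h1 with h1 | h1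
        · exfalso
          have : ((t:ℂ)+1) ≠ 0 := by
            exact_mod_cast (Nat.cast_add_one_ne_zero t : ((t:ℂ)+1) ≠ 0)
          exact this h1
        · exact h1
      · exact absurd h1 hh
    obtain ⟨v2, hv2⟩ := dvd_iff_isRoot.mpr hveval
    refine ⟨v2, ?_⟩
    rw [hv, hv2, pow_succ]
    ring


lemma derivative_finset_prod {ι : Type*} [DecidableEq ι] (s : Finset ι) (f : ι → ℂ[X]) :
    derivative (∏ i ∈ s, f i) = ∑ i ∈ s, (∏ j ∈ s.erase i, f j) * derivative (f i) := by
  induction s using Finset.induction_on with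
  | empty => simp
  | @insert a s ha ih =>
    have h2 : ∑ i ∈ s, (∏ j ∈ (insert a s).erase i, f j) * derivative (f i)
        = ∑ i ∈ s, f a * ((∏ j ∈ s.erase i, f j) * derivative (f i)) :=
      Finset.sum_congr rfl (fun i hi => by
        rw [Finset.erase_insert_of_ne (by rintro rfl; exact ha hi), Finset.prod_insert
          (fun h => ha (Finset.mem_of_mem_erase h)), mul_assoc])
    rw [Finset.prod_insert ha, derivative_mul, ih, Finset.sum_insert ha,
      Finset.erase_insert ha, h2, ← Finset.mul_sum]
    ring

lemma derivpow (p : ℂ[X]) (hd : derivative p = 1) (n : ℕ) :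
    derivative (p^n) = C (n:ℂ) * p^(n-1) := by
  rw [derivative_pow, hd, mul_one, Polynomial.C_eq_natCast]

lemma logderiv_id (q : ℕ) (p : Fin q → ℂ[X]) (hder : ∀ j, derivative (p j) = 1)
    (B : Fin q → ℤ) (hB : ∀ j, B j ≠ 0) :
    derivative (∏ j, (p j)^(B j).toNat) * (∏ j, (p j)^(-(B j)).toNat)
    - (∏ j, (p j)^(B j).toNat) * derivative (∏ j, (p j)^(-(B j)).toNat)
    = (∏ j, (p j)^((B j).natAbs - 1)) *
      (∑ j, C ((B j : ℂ)) * ∏ i ∈ Finset.univ.erase j, (p i)) := by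
  rw [derivative_finset_prod, derivative_finset_prod, Finset.sum_mul, Finset.mul_sum,
    ← Finset.sum_sub_distrib, Finset.mul_sum]
  refine Finset.sum_congr rfl (fun j _ => ?_)
  set G : ℂ[X] := ∏ i ∈ Finset.univ.erase j, (p i)^(B i).toNat with hG
  set H : ℂ[X] := ∏ i ∈ Finset.univ.erase j, (p i)^(-(B i)).toNat with hH
  set Mj : ℂ[X] := ∏ i ∈ Finset.univ.erase j, (p i)^((B i).natAbs - 1) with hMj
  set Pj : ℂ[X] := ∏ i ∈ Finset.univ.erase j, (p i) with hPj
  have hge : (∏ i, (p i)^(B i).toNat) = (p j)^(B j).toNat * G :=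
    (Finset.mul_prod_erase Finset.univ (fun i => (p i)^(B i).toNat) (Finset.mem_univ j)).symm
  have hgf : (∏ i, (p i)^(-(B i)).toNat) = (p j)^(-(B j)).toNat * H :=
    (Finset.mul_prod_erase Finset.univ (fun i => (p i)^(-(B i)).toNat) (Finset.mem_univ j)).symm
  have hgm : (∏ i, (p i)^((B i).natAbs - 1)) = (p j)^((B j).natAbs - 1) * Mj :=
    (Finset.mul_prod_erase Finset.univ (fun i => (p i)^((B i).natAbs - 1)) (Finset.mem_univ j)).symm
  have hMP : Mj * Pj = G * H := by
    rw [hMj, hPj, hG, hH, ← Finset.prod_mul_distrib, ← Finset.prod_mul_distrib]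
    refine Finset.prod_congr rfl (fun i _ => ?_)
    rw [← pow_succ, ← pow_add]
    congr 1
    have := hB i
    omega
  have hbr : C (((B j).toNat : ℂ)) * (p j)^((B j).toNat - 1) * (p j)^(-(B j)).toNat
      - (p j)^(B j).toNat * (C (((-(B j)).toNat : ℂ)) * (p j)^((-(B j)).toNat - 1))
      = C ((B j : ℂ)) * (p j)^((B j).natAbs - 1) := by
    rcases lt_or_gt_of_ne (hB j) with hneg | hpos
    · have he0 : (B j).toNat = 0 := by omega
      have hfnb : (-(B j)).toNat = (B j).natAbs := by omega
      have hBf : ((B j : ℤ) : ℂ) = -(((B j).natAbs : ℕ) : ℂ) := by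
        have h1 : (B j : ℤ) = -(((B j).natAbs : ℕ) : ℤ) := by omega
        conv_lhs => rw [h1, Int.cast_neg, Int.cast_natCast]
      rw [he0, hfnb, hBf]
      simp [zero_sub, neg_mul]
    · have hf0 : (-(B j)).toNat = 0 := by omega
      have henb : (B j).toNat = (B j).natAbs := by omega
      have hBe : ((B j : ℤ) : ℂ) = (((B j).natAbs : ℕ) : ℂ) := by
        have h1 : (B j : ℤ) = (((B j).natAbs : ℕ) : ℤ) := by omega
        conv_lhs => rw [h1, Int.cast_natCast]
      rw [hf0, henb, hBe]
      simp
  rw [hge, hgf, hgm, derivpow _ (hder j), derivpow _ (hder j)]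
  calc (G * (C (((B j).toNat : ℂ)) * (p j)^((B j).toNat - 1))) * ((p j)^(-(B j)).toNat * H)
      - ((p j)^(B j).toNat * G) * (H * (C (((-(B j)).toNat : ℂ)) * (p j)^((-(B j)).toNat - 1)))
      = (C (((B j).toNat : ℂ)) * (p j)^((B j).toNat - 1) * (p j)^(-(B j)).toNat
          - (p j)^(B j).toNat * (C (((-(B j)).toNat : ℂ)) * (p j)^((-(B j)).toNat - 1))) * (G * H) := by
        ring
    _ = (C ((B j : ℂ)) * (p j)^((B j).natAbs - 1)) * (Mj * Pj) := by rw [hbr, hMP]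
    _ = ((p j)^((B j).natAbs - 1) * Mj) * (C ((B j : ℂ)) * Pj) := by ring


theorem coaxial_angles_necessity_of_21
    (n m : ℕ) (hmn : m ≤ n) (α : Fin n → ℝ) (a : Fin n → ℕ)
    (hpos : ∀ j : Fin n, (j : ℕ) < m → 0 < α j)
    (hnonint : ∀ j : Fin n, (j : ℕ) < m → ¬ ∃ t : ℤ, α j = t)
    (hint : ∀ j : Fin n, m ≤ (j : ℕ) → 2 ≤ a j ∧ α j = a j)
    (ε : Fin m → ℝ) (hε : ∀ i, ε i = 1 ∨ ε i = -1)
    (k' k'' : ℕ)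
    (halt : ∑ i : Fin m, ε i * α (Fin.castLE hmn i) = k')
    (hk''def : (k'' : ℝ) =
      ∑ j ∈ Finset.univ.filter (fun j : Fin n => m ≤ (j : ℕ)), α j - n - k' + 2)
    (q : ℕ) (hq : q = m + (k' + k''))
    (c : Fin q → ℝ)
    (hcdef : ∀ j : Fin q,
      c j = if h : (j : ℕ) < m then α (Fin.castLE hmn ⟨(j : ℕ), h⟩) else 1)
    (η : ℝ) (b : Fin q → ℤ) (hη : η ≠ 0)
    (hcb : ∀ j, c j = η * (b j : ℝ))
    (hprim : Finset.univ.gcd (fun j => (b j).natAbs) = 1)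
    (hexist :
      ∃ δ : Fin (k' + k'') → ℝ,
        (∀ i, δ i = 1 ∨ δ i = -1) ∧
        ∑ i : Fin m, ε i * α (Fin.castLE hmn i) + ∑ i, δ i = 0 ∧
        ∃ z : Fin q → ℂ, Function.Injective z ∧
          ∃ K : ℂ, K ≠ 0 ∧
            ∃ w : Fin n → ℂ,
              (∀ j j' : Fin n, m ≤ (j : ℕ) → m ≤ (j' : ℕ) → w j = w j' → j = j') ∧
              ∑ j : Fin q,
                  Polynomial.C
                    (((if h : (j : ℕ) < m then ε ⟨(j : ℕ), h⟩ * α (Fin.castLE hmn ⟨(j : ℕ), h⟩)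
                       else δ ⟨(j : ℕ) - m, by have := j.isLt; omega⟩) : ℝ) : ℂ) *
                    ∏ i ∈ Finset.univ.erase j, (Polynomial.X - Polynomial.C (z i))
                = Polynomial.C K *
                    ∏ j ∈ Finset.univ.filter (fun j : Fin n => m ≤ (j : ℕ)),
                      (Polynomial.X - Polynomial.C (w j)) ^ (a j - 1)) :
    ∀ j : Fin n, m ≤ (j : ℕ) → 2 * α j ≤ ∑ i, |(b i : ℝ)| := by
  intro j0 hj0
  obtain ⟨δ, hδ, hsum0, z, hzinj, K, hK, w, hwinj, hpoly⟩ := hexist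
  subst hq
  -- the real coefficients
  set creal : Fin (m + (k' + k'')) → ℝ := fun j =>
    if h : (j : ℕ) < m then ε ⟨(j : ℕ), h⟩ * α (Fin.castLE hmn ⟨(j : ℕ), h⟩)
    else δ ⟨(j : ℕ) - m, by have := j.isLt; omega⟩ with hcreal
  have hpoly' : ∑ j : Fin (m + (k' + k'')), C ((creal j : ℝ) : ℂ) *
      ∏ i ∈ Finset.univ.erase j, (X - C (z i))
      = C K * ∏ j ∈ Finset.univ.filter (fun j : Fin n => m ≤ (j : ℕ)),
          (X - C (w j)) ^ (a j - 1) := hpoly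
  clear hpoly
  -- positivity of c
  have hcpos : ∀ j, 0 < c j := by
    intro j
    rw [hcdef]
    split
    · exact hpos _ (by assumption)
    · norm_num
  -- sign relation
  have hsign : ∀ j, creal j = c j ∨ creal j = -(c j) := by
    intro j
    simp only [hcreal]
    rw [hcdef]
    by_cases h : (j : ℕ) < m
    · rw [dif_pos h, dif_pos h]
      rcases hε ⟨(j : ℕ), h⟩ with h1 | h1 <;> rw [h1]
      · left; ring
      · right; ring
    · rw [dif_neg h, dif_neg h]
      rcases hδ ⟨(j : ℕ) - m, by have := j.isLt; omega⟩ with h1 | h1 <;> rw [h1]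
      · left; rfl
      · right; ring
  have hcne : ∀ j, creal j ≠ 0 := by
    intro j
    rcases hsign j with h | h <;> rw [h]
    · exact (hcpos j).ne'
    · simpa using (hcpos j).ne'
  -- integer residues
  set B : Fin (m + (k' + k'')) → ℤ := fun j => if creal j = c j then b j else -(b j) with hB
  have hBeq : ∀ j, creal j = η * ((B j : ℤ) : ℝ) := by
    intro j
    simp only [hB]
    by_cases h : creal j = c j
    · rw [if_pos h, h, hcb j]
    · rcases hsign j with h1 | h1
      · exact absurd h1 h
      · rw [if_neg h, h1, hcb j]
        push_cast
        ring
  have hBabs : ∀ j, (B j).natAbs = (b j).natAbs := by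
    intro j
    simp only [hB]
    split <;> simp
  have hBne : ∀ j, B j ≠ 0 := by
    intro j hj
    have h1 := hBeq j
    rw [hj] at h1
    simp at h1
    exact hcne j h1
  -- sum of creal is zero
  have hsumc : ∑ j, creal j = 0 := by
    have e1 : ∀ i : Fin m, creal (Fin.castAdd (k'+k'') i) = ε i * α (Fin.castLE hmn i) := by
      intro i
      have hi : ((Fin.castAdd (k'+k'') i : Fin (m+(k'+k''))) : ℕ) < m := by simpa using i.isLt
      simp only [hcreal]
      rw [dif_pos hi]
      have h2 : (⟨((Fin.castAdd (k'+k'') i : Fin (m+(k'+k''))) : ℕ), hi⟩ : Fin m) = i := by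
        ext; simp
      rw [h2]
    have e2 : ∀ i : Fin (k'+k''), creal (Fin.natAdd m i) = δ i := by
      intro i
      have hi : ¬ ((Fin.natAdd m i : Fin (m+(k'+k''))) : ℕ) < m := by simp
      simp only [hcreal]
      rw [dif_neg hi]
      congr 1
      ext
      simp
    rw [Fin.sum_univ_add, Finset.sum_congr rfl (fun i _ => e1 i),
      Finset.sum_congr rfl (fun i _ => e2 i)]
    exact hsum0
  have hBsum : ∑ j, B j = 0 := by
    have h1 : η * ∑ j, ((B j : ℤ) : ℝ) = 0 := by
      calc η * ∑ j, ((B j : ℤ) : ℝ) = ∑ j, η * ((B j : ℤ) : ℝ) := Finset.mul_sum _ _ _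
        _ = ∑ j, creal j := Finset.sum_congr rfl (fun j _ => (hBeq j).symm)
        _ = 0 := hsumc
    have h2 : ∑ j, ((B j : ℤ) : ℝ) = 0 := by
      rcases mul_eq_zero.mp h1 with h | h
      · exact absurd h hη
      · exact h
    exact_mod_cast h2
  -- the integer-residue numerator polynomial
  set S : ℂ[X] := ∑ j, C ((B j : ℤ) : ℂ) * ∏ i ∈ Finset.univ.erase j, (X - C (z i)) with hSdef
  have hCS : C ((η : ℝ) : ℂ) * S = C K * ∏ j ∈ Finset.univ.filter (fun j : Fin n => m ≤ (j : ℕ)),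
      (X - C (w j)) ^ (a j - 1) := by
    rw [← hpoly', hSdef, Finset.mul_sum]
    refine Finset.sum_congr rfl (fun j _ => ?_)
    rw [← mul_assoc, ← C_mul]
    have h3 : ((creal j : ℝ) : ℂ) = ((η : ℝ) : ℂ) * ((B j : ℤ) : ℂ) := by
      rw [hBeq j]; push_cast; ring
    rw [h3]
  have hηC : ((η : ℝ) : ℂ) ≠ 0 := by exact_mod_cast hη
  have hj0mem : j0 ∈ Finset.univ.filter (fun j : Fin n => m ≤ (j : ℕ)) := by simp [hj0]
  have ha2 : 2 ≤ a j0 := (hint j0 hj0).1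
  have hdvdS : (X - C (w j0)) ^ (a j0 - 1) ∣ S := by
    have hdvd1 : (X - C (w j0)) ^ (a j0 - 1) ∣ C ((η : ℝ) : ℂ) * S := by
      rw [hCS]
      exact Dvd.dvd.mul_left
        (Finset.dvd_prod_of_mem (fun j => (X - C (w j)) ^ (a j - 1)) hj0mem) _
    have hinv : S = C (((η : ℝ) : ℂ)⁻¹) * (C ((η : ℝ) : ℂ) * S) := by
      rw [← mul_assoc, ← C_mul, inv_mul_cancel₀ hηC, C_1, one_mul]
    rw [hinv]
    exact hdvd1.mul_left _
  -- w j0 is not one of the z i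
  have hwz : ∀ i, z i ≠ w j0 := by
    intro i hzi
    have heval := congrArg (eval (z i)) hpoly'
    rw [eval_finset_sum, eval_mul, eval_C, eval_prod] at heval
    have hL : ∑ j, eval (z i) (C ((creal j : ℝ) : ℂ) * ∏ k ∈ Finset.univ.erase j, (X - C (z k)))
        = ((creal i : ℝ) : ℂ) * ∏ k ∈ Finset.univ.erase i, (z i - z k) := by
      rw [Finset.sum_eq_single i]
      · simp [eval_prod]
      · intro j _ hne
        have hz0 : eval (z i) (∏ k ∈ Finset.univ.erase j, (X - C (z k))) = 0 := by
          rw [eval_prod]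
          exact Finset.prod_eq_zero (Finset.mem_erase.mpr ⟨hne.symm, Finset.mem_univ i⟩)
            (by simp)
        simp [hz0]
      · simp
    rw [hL] at heval
    have hR : ∏ j ∈ Finset.univ.filter (fun j : Fin n => m ≤ (j : ℕ)),
        eval (z i) ((X - C (w j)) ^ (a j - 1)) = 0 := by
      refine Finset.prod_eq_zero hj0mem ?_
      rw [eval_pow, eval_sub, eval_X, eval_C, hzi, sub_self]
      exact zero_pow (by omega)
    rw [hR, mul_zero] at heval
    have hL0 : ((creal i : ℝ) : ℂ) * ∏ k ∈ Finset.univ.erase i, (z i - z k) ≠ 0 := by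
      apply mul_ne_zero
      · exact_mod_cast hcne i
      · rw [Finset.prod_ne_zero_iff]
        intro k hk
        exact sub_ne_zero.mpr (fun h => (Finset.mem_erase.mp hk).1 (hzinj h.symm))
    exact hL0 heval
  -- the rational map g / h
  set p : Fin (m+(k'+k'')) → ℂ[X] := fun j => X - C (z j) with hpdef
  have hpder : ∀ j, derivative (p j) = 1 := fun j => by
    simp [hpdef]
  set g : ℂ[X] := ∏ j, (p j) ^ (B j).toNat with hgdef
  set hh : ℂ[X] := ∏ j, (p j) ^ (-(B j)).toNat with hhdef
  set Mp : ℂ[X] := ∏ j, (p j) ^ ((B j).natAbs - 1) with hMdef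
  have hkey : derivative g * hh - g * derivative hh = Mp * S :=
    logderiv_id _ p hpder B hBne
  have hpev : ∀ j, eval (w j0) (p j) ≠ 0 := by
    intro j
    simp only [hpdef]
    rw [eval_sub, eval_X, eval_C]
    exact sub_ne_zero.mpr (fun h => hwz j h.symm)
  have hhev : eval (w j0) hh ≠ 0 := by
    rw [hhdef, eval_prod]
    rw [Finset.prod_ne_zero_iff]
    intro j _
    rw [eval_pow]
    exact pow_ne_zero _ (hpev j)
  have hgev : eval (w j0) g ≠ 0 := by
    rw [hgdef, eval_prod]
    rw [Finset.prod_ne_zero_iff]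
    intro j _
    rw [eval_pow]
    exact pow_ne_zero _ (hpev j)
  set u : ℂ[X] := C (eval (w j0) hh) * g - C (eval (w j0) g) * hh with hudef
  have hu0 : eval (w j0) u = 0 := by
    rw [hudef]
    simp
    ring
  have huder : derivative u * hh - u * derivative hh
      = C (eval (w j0) hh) * (derivative g * hh - g * derivative hh) := by
    rw [hudef, derivative_sub, derivative_mul, derivative_mul, derivative_C, derivative_C]
    ring
  have hdvdu : (X - C (w j0)) ^ (a j0 - 1) ∣ derivative u * hh - u * derivative hh := by
    rw [huder, hkey]
    exact (hdvdS.mul_left Mp).mul_left _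
  have hdvdu2 : (X - C (w j0)) ^ (a j0) ∣ u := by
    have := key_dvd u hh (w j0) hu0 hhev (a j0 - 1) hdvdu
    have he : a j0 - 1 + 1 = a j0 := by omega
    rwa [he] at this
  -- q is positive
  have hq0 : 0 < m + (k' + k'') := by
    by_contra hc0
    have hq00 : m + (k' + k'') = 0 := by omega
    have hS0 : S = 0 := by
      rw [hSdef]
      apply Finset.sum_eq_zero
      intro j _
      exact absurd (j.isLt) (by omega)
    rw [hS0, mul_zero] at hCS
    have : C K * ∏ j ∈ Finset.univ.filter (fun j : Fin n => m ≤ (j : ℕ)),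
        (X - C (w j)) ^ (a j - 1) ≠ 0 := by
      apply mul_ne_zero (by simpa using hK)
      rw [Finset.prod_ne_zero_iff]
      intro j _
      exact pow_ne_zero _ (X_sub_C_ne_zero (w j))
    exact this hCS.symm
  have : Nonempty (Fin (m + (k' + k''))) := ⟨⟨0, hq0⟩⟩
  -- a positive residue exists
  have hjp : ∃ jp, 0 < B jp := by
    by_contra hno
    push_neg at hno
    have hneg : ∀ jp ∈ Finset.univ, B jp < 0 := fun jp _ => lt_of_le_of_ne (hno jp) (hBne jp)
    have hlt := Finset.sum_neg hneg Finset.univ_nonempty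
    rw [hBsum] at hlt
    exact lt_irrefl 0 hlt
  obtain ⟨jp, hjp⟩ := hjp
  -- u is nonzero
  have hune : u ≠ 0 := by
    intro h0
    have hev := congrArg (eval (z jp)) h0
    rw [hudef] at hev
    simp only [eval_sub, eval_mul, eval_C, eval_zero] at hev
    have hgz : eval (z jp) g = 0 := by
      rw [hgdef, eval_prod]
      refine Finset.prod_eq_zero (Finset.mem_univ jp) ?_
      rw [eval_pow]
      have : eval (z jp) (p jp) = 0 := by simp [hpdef]
      rw [this]
      exact zero_pow (by omega)
    have hhz : eval (z jp) hh ≠ 0 := by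
      rw [hhdef, eval_prod, Finset.prod_ne_zero_iff]
      intro k _
      rw [eval_pow]
      by_cases hkj : k = jp
      · subst hkj
        have : (-(B k)).toNat = 0 := by omega
        rw [this, pow_zero]
        exact one_ne_zero
      · apply pow_ne_zero
        simp only [hpdef]
        rw [eval_sub, eval_X, eval_C]
        exact sub_ne_zero.mpr (fun h => hkj (hzinj h).symm)
    rw [hgz, mul_zero, zero_sub, neg_eq_zero] at hev
    exact (mul_ne_zero hgev hhz) hev
  -- degrees
  have hdegg : g.natDegree = ∑ j, (B j).toNat := by
    rw [hgdef, natDegree_prod _ _ (fun j _ => pow_ne_zero _ (X_sub_C_ne_zero (z j)))]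
    refine Finset.sum_congr rfl (fun j _ => ?_)
    simp only [hpdef, natDegree_pow, natDegree_X_sub_C, mul_one]
  have hdegh : hh.natDegree = ∑ j, (-(B j)).toNat := by
    rw [hhdef, natDegree_prod _ _ (fun j _ => pow_ne_zero _ (X_sub_C_ne_zero (z j)))]
    refine Finset.sum_congr rfl (fun j _ => ?_)
    simp only [hpdef, natDegree_pow, natDegree_X_sub_C, mul_one]
  have hdeq : ∑ j, (B j).toNat = ∑ j, (-(B j)).toNat := by
    have h1 : ∑ j, ((B j).toNat : ℤ) - ∑ j, ((-(B j)).toNat : ℤ) = ∑ j, B j := by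
      rw [← Finset.sum_sub_distrib]
      refine Finset.sum_congr rfl (fun j _ => ?_)
      omega
    rw [hBsum] at h1
    have h2 : (∑ j, ((B j).toNat : ℤ)) = ∑ j, ((-(B j)).toNat : ℤ) := by omega
    exact_mod_cast h2
  have hudeg : u.natDegree ≤ ∑ j, (B j).toNat := by
    refine le_trans (natDegree_sub_le _ _) ?_
    apply max_le
    · exact le_trans (natDegree_C_mul_le _ _) hdegg.le
    · exact le_trans (natDegree_C_mul_le _ _) (by rw [hdegh, ← hdeq])
  have hadeg : a j0 ≤ u.natDegree := by
    have h1 := natDegree_le_of_dvd hdvdu2 hune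
    rwa [natDegree_pow, natDegree_X_sub_C, mul_one] at h1
  -- conclude
  have hfinal : 2 * a j0 ≤ ∑ j, (b j).natAbs := by
    have h1 : 2 * a j0 ≤ 2 * ∑ j, (B j).toNat := by omega
    have h2 : 2 * ∑ j, (B j).toNat = ∑ j, (B j).toNat + ∑ j, (-(B j)).toNat := by
      rw [← hdeq]; ring
    have h3 : ∑ j, (B j).toNat + ∑ j, (-(B j)).toNat = ∑ j, (b j).natAbs := by
      rw [← Finset.sum_add_distrib]
      refine Finset.sum_congr rfl (fun j _ => ?_)
      rw [← hBabs j]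
      omega
    omega
  have hαa : α j0 = (a j0 : ℝ) := (hint j0 hj0).2
  have habs : ∀ i, |((b i : ℤ) : ℝ)| = (((b i).natAbs : ℕ) : ℝ) := by
    intro i
    rw [Nat.cast_natAbs, Int.cast_abs]
  rw [hαa]
  calc 2 * ((a j0 : ℕ) : ℝ) ≤ ((∑ j, (b j).natAbs : ℕ) : ℝ) := by exact_mod_cast hfinal
    _ = ∑ i, |((b i : ℤ) : ℝ)| := by
        rw [Nat.cast_sum]
        exact Finset.sum_congr rfl (fun i _ => (habs i).symm)
end

section
/- Let a, b, c, d be positive real numbers with a + b = c + d. There exist pairwise distinct complex numbers z_1, z_2, z_3, z_4, a nonzero constant C ∈ ℂ, and a complex number w such that a(X−z_2)(X−z_3)(X−z_4) + b(X−z_1)(X−z_3)(X−z_4) − c(X−z_1)(X−z_2)(X−z_4) − d(X−z_1)(X−z_2)(X−z_3) = C(X − w)^2 in ℂ[X], if and only if it is not the case that a = b = c = d. -/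
open Polynomial

private lemma keyz (a b c d z₁ z₂ z₃ z₄ K : ℂ)
    (h3 : a + b - c - d = 0)
    (h2 : a*(z₂+z₃+z₄) + b*(z₁+z₃+z₄) - c*(z₁+z₂+z₄) - d*(z₁+z₂+z₃) = -K)
    (h1 : a*(z₂*z₃+z₂*z₄+z₃*z₄) + b*(z₁*z₃+z₁*z₄+z₃*z₄)
        - c*(z₁*z₂+z₁*z₄+z₂*z₄) - d*(z₁*z₂+z₁*z₃+z₂*z₃) = 0)
    (h0 : a*(z₂*z₃*z₄) + b*(z₁*z₃*z₄) - c*(z₁*z₂*z₄) - d*(z₁*z₂*z₃) = 0) :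
    C a * ((X - C z₂) * (X - C z₃) * (X - C z₄)) +
    C b * ((X - C z₁) * (X - C z₃) * (X - C z₄)) -
    C c * ((X - C z₁) * (X - C z₂) * (X - C z₄)) -
    C d * ((X - C z₁) * (X - C z₂) * (X - C z₃))
      = C K * (X - C 0) ^ 2 := by
  have e : C a * ((X - C z₂) * (X - C z₃) * (X - C z₄)) +
    C b * ((X - C z₁) * (X - C z₃) * (X - C z₄)) -
    C c * ((X - C z₁) * (X - C z₂) * (X - C z₄)) -
    C d * ((X - C z₁) * (X - C z₂) * (X - C z₃))
      = C (a + b - c - d) * X^3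
        - C (a*(z₂+z₃+z₄) + b*(z₁+z₃+z₄) - c*(z₁+z₂+z₄) - d*(z₁+z₂+z₃)) * X^2
        + C (a*(z₂*z₃+z₂*z₄+z₃*z₄) + b*(z₁*z₃+z₁*z₄+z₃*z₄)
            - c*(z₁*z₂+z₁*z₄+z₂*z₄) - d*(z₁*z₂+z₁*z₃+z₂*z₃)) * X
        - C (a*(z₂*z₃*z₄) + b*(z₁*z₃*z₄) - c*(z₁*z₂*z₄) - d*(z₁*z₂*z₃)) := by
    simp only [map_add, map_sub, map_mul]
    ring
  rw [e, h3, h2, h1, h0]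
  simp only [map_zero, map_neg]
  ring

theorem two_positive_two_negative_double_zero_iff
    (a b c d : ℝ) (ha : 0 < a) (hb : 0 < b) (hc : 0 < c) (hd : 0 < d)
    (hsum : a + b = c + d) :
    (∃ z₁ z₂ z₃ z₄ : ℂ,
        (z₁ ≠ z₂ ∧ z₁ ≠ z₃ ∧ z₁ ≠ z₄ ∧ z₂ ≠ z₃ ∧ z₂ ≠ z₄ ∧ z₃ ≠ z₄) ∧
        ∃ K : ℂ, K ≠ 0 ∧ ∃ w : ℂ,
          C (a : ℂ) * ((X - C z₂) * (X - C z₃) * (X - C z₄)) +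
          C (b : ℂ) * ((X - C z₁) * (X - C z₃) * (X - C z₄)) -
          C (c : ℂ) * ((X - C z₁) * (X - C z₂) * (X - C z₄)) -
          C (d : ℂ) * ((X - C z₁) * (X - C z₂) * (X - C z₃))
            = C K * (X - C w) ^ 2) ↔
      ¬ (a = b ∧ b = c ∧ c = d) := by
  constructor
  · rintro ⟨z₁, z₂, z₃, z₄, ⟨h12, h13, h14, h23, h24, h34⟩, K, hK, w, hp⟩ ⟨hab, hbc, hcd⟩
    subst hab; subst hbc; subst hcd
    have e0 := congrArg (Polynomial.eval (0:ℂ)) hp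
    have e1 := congrArg (Polynomial.eval (1:ℂ)) hp
    have e2 := congrArg (Polynomial.eval (-1:ℂ)) hp
    simp only [eval_add, eval_sub, eval_mul, eval_pow, eval_C, eval_X] at e0 e1 e2
    set t : ℂ := (a : ℂ) with ht
    have hc2 : K = t*(z₁+z₂-z₃-z₄) := by linear_combination e0 - (1/2)*e1 - (1/2)*e2
    have hc1 : K*w = t*(z₁*z₂ - z₃*z₄) := by linear_combination (1/4)*e1 - (1/4)*e2
    have hc0 : K*w^2 = t*(z₁*z₂*(z₃+z₄) - z₃*z₄*(z₁+z₂)) := by linear_combination -e0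
    have hA : K*((w-z₁)*(w-z₂)) = 0 := by
      linear_combination hc0 - (z₁+z₂)*hc1 + (z₁*z₂)*hc2
    have hB : K*((w-z₃)*(w-z₄)) = 0 := by
      linear_combination hc0 - (z₃+z₄)*hc1 + (z₃*z₄)*hc2
    have hA' := (mul_eq_zero.mp hA).resolve_left hK
    have hB' := (mul_eq_zero.mp hB).resolve_left hK
    rcases mul_eq_zero.mp hA' with h1 | h1 <;> rcases mul_eq_zero.mp hB' with h2 | h2 <;>
      [ (exact h13 (by linear_combination h2 - h1));
        (exact h14 (by linear_combination h2 - h1));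
        (exact h23 (by linear_combination h2 - h1));
        (exact h24 (by linear_combination h2 - h1)) ]
  · intro hne
    have hsumC : (a:ℂ) + b = c + d := by exact_mod_cast hsum
    by_cases hac : a = c
    · -- then b = d, and a ≠ b
      subst hac
      have hbd' : b = d := by linarith
      subst hbd'
      have hab : a ≠ b := by
        intro h
        exact hne ⟨h, h.symm, h⟩
      refine ⟨((a:ℝ):ℂ), ((-b:ℝ):ℂ), ((-a:ℝ):ℂ), ((b:ℝ):ℂ), ⟨?_, ?_, ?_, ?_, ?_, ?_⟩,
        ((2*(a^2-b^2) : ℝ) : ℂ), ?_, 0, ?_⟩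
      · rw [Ne, Complex.ofReal_inj]; intro h; linarith
      · rw [Ne, Complex.ofReal_inj]; intro h; linarith
      · rw [Ne, Complex.ofReal_inj]; exact hab
      · rw [Ne, Complex.ofReal_inj]; intro h; exact hab (by linarith)
      · rw [Ne, Complex.ofReal_inj]; intro h; linarith
      · rw [Ne, Complex.ofReal_inj]; intro h; linarith
      · rw [ne_eq, Complex.ofReal_eq_zero]
        intro h
        rcases lt_or_gt_of_ne hab with h' | h' <;> nlinarith
      · apply keyz
        · ring
        · push_cast; ring
        · push_cast; ring
        · push_cast; ring
    · -- a ≠ c, then b ≠ d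
      have hbd : b ≠ d := fun h => hac (by linarith)
      set r : ℝ := Real.sqrt (a*c/(b*d)) with hrdef
      have hrpos : 0 < r := Real.sqrt_pos.mpr (by positivity)
      have hr2 : r^2*(b*d) = a*c := by
        have : r^2 = a*c/(b*d) := Real.sq_sqrt (by positivity)
        rw [this]; field_simp
      have hr2C : (r:ℂ)^2*((b:ℂ)*(d:ℂ)) = (a:ℂ)*(c:ℂ) := by exact_mod_cast hr2
      refine ⟨((a*b*d*r : ℝ) : ℂ), ((-(a*b*c) : ℝ) : ℂ), ((b*c*d*r : ℝ) : ℂ), ((-(a*c*d) : ℝ) : ℂ),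
        ⟨?_, ?_, ?_, ?_, ?_, ?_⟩,
        ((a^2*b*d*r - a*b^2*c - b*c^2*d*r + a*c*d^2 : ℝ) : ℂ), ?_, 0, ?_⟩
      · rw [Ne, Complex.ofReal_inj]; intro h
        have h1 : (0:ℝ) < a*b*d*r := by positivity
        have h2 : (0:ℝ) < a*b*c := by positivity
        linarith
      · rw [Ne, Complex.ofReal_inj]; intro h
        apply hac
        have hbdr : (0:ℝ) < b*d*r := by positivity
        have : a*(b*d*r) = c*(b*d*r) := by linarith [h]
        exact mul_right_cancel₀ (ne_of_gt hbdr) this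
      · rw [Ne, Complex.ofReal_inj]; intro h
        have h1 : (0:ℝ) < a*b*d*r := by positivity
        have h2 : (0:ℝ) < a*c*d := by positivity
        linarith
      · rw [Ne, Complex.ofReal_inj]; intro h
        have h1 : (0:ℝ) < b*c*d*r := by positivity
        have h2 : (0:ℝ) < a*b*c := by positivity
        linarith
      · rw [Ne, Complex.ofReal_inj]; intro h
        apply hbd
        have hacp : (0:ℝ) < a*c := by positivity
        have : b*(a*c) = d*(a*c) := by nlinarith [h]
        exact mul_right_cancel₀ (ne_of_gt hacp) this
      · rw [Ne, Complex.ofReal_inj]; intro h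
        have h1 : (0:ℝ) < b*c*d*r := by positivity
        have h2 : (0:ℝ) < a*c*d := by positivity
        linarith
      · rw [ne_eq, Complex.ofReal_eq_zero]
        have hfact : a^2*b*d*r - a*b^2*c - b*c^2*d*r + a*c*d^2
            = (a-c)*(b*d*r*(a+c) + a*c*(d+b)) := by
          linear_combination (-(a*c*(d+b))) * hsum
        rw [hfact]
        exact mul_ne_zero (sub_ne_zero.mpr hac) (by positivity)
      · apply keyz
        · linear_combination hsumC
        · push_cast; linear_combination ((a:ℂ)*b*d*r - a*b*c + b*c*d*r - a*c*d) * hsumC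
        · push_cast; linear_combination ((a:ℂ)*b*c*d*((b:ℂ)-d)) * hr2C + ((a:ℂ)^2*b*c^2*d) * hsumC
        · push_cast; ring
end
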